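/- Let I, J, K be finite sets, r a recollement of I,J and s a recollement of J,K, and let u be a recollement of I,J,K with π₁,₂(u) = r and π₁,₃(u) restricted appropriately. Fix d ∈ ℕ with #(π₁,₃(u)) ≤ d. The number of ways to extend a fixed sequence ((i₁,k₁),…,(i_d,k_d)) adapted to π₁,₃(u) by elements j₁,…,j_d ∈ J ⊔ {∅} so that both ((i_a,j_a))_a is adapted to r and ((j_a,k_a))_a is adapted to s equals the falling factorial (d − #π₁,₃(u))(d − #π₁,₃(u) − 1)⋯(d − #u + 1). -/

import Mathlib

/-- A recollement of three sets `I`, `J`, `K`: an equivalence relation on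
`I ⊔ J ⊔ K` whose classes contain at most one element of each of `I`, `J`, `K`. -/
def IsRecollement3 {I J K : Type*} (u : Setoid (I ⊕ J ⊕ K)) : Prop :=
  (∀ i i' : I, u (Sum.inl i) (Sum.inl i') → i = i') ∧
  (∀ j j' : J, u (Sum.inr (Sum.inl j)) (Sum.inr (Sum.inl j')) → j = j') ∧
  (∀ k k' : K, u (Sum.inr (Sum.inr k)) (Sum.inr (Sum.inr k')) → k = k')

/-- Restriction `π₁,₂` of an equivalence relation on `I ⊔ J ⊔ K` to `I ⊔ J`. -/
def pi12 {I J K : Type*} (u : Setoid (I ⊕ J ⊕ K)) : Setoid (I ⊕ J) :=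
  Setoid.comap (Sum.map id Sum.inl) u

/-- Restriction `π₂,₃` of an equivalence relation on `I ⊔ J ⊔ K` to `J ⊔ K`. -/
def pi23 {I J K : Type*} (u : Setoid (I ⊕ J ⊕ K)) : Setoid (J ⊕ K) :=
  Setoid.comap Sum.inr u

/-- Restriction `π₁,₃` of an equivalence relation on `I ⊔ J ⊔ K` to `I ⊔ K`. -/
def pi13 {I J K : Type*} (u : Setoid (I ⊕ J ⊕ K)) : Setoid (I ⊕ K) :=
  Setoid.comap (Sum.map id Sum.inr) u

/-- A sequence `((i₁,j₁),…,(i_d,j_d))` with entries in `(A ⊔ {∅}) × (B ⊔ {∅})`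
is adapted to a recollement `r` of `A` and `B` if, after deleting the pairs
`(∅,∅)`, it enumerates the equivalence classes of `r` exactly once each
(where a class is recorded as `(i,j)`, `(i,∅)` or `(∅,j)`). -/
def Adapted {A B : Type*} {d : ℕ} (r : Setoid (A ⊕ B)) (f : Fin d → Option A × Option B) : Prop :=
  (∀ i : A, ∃! a : Fin d, (f a).1 = some i) ∧
  (∀ j : B, ∃! a : Fin d, (f a).2 = some j) ∧
  (∀ (a : Fin d) (i : A) (j : B), f a = (some i, some j) → r (Sum.inl i) (Sum.inr j)) ∧
  (∀ (a : Fin d) (i : A), f a = (some i, none) → ∀ j : B, ¬ r (Sum.inl i) (Sum.inr j)) ∧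
  (∀ (a : Fin d) (j : B), f a = (none, some j) → ∀ i : A, ¬ r (Sum.inl i) (Sum.inr j))

namespace CAE

variable {I J K : Type*} {d : ℕ}

/-- `j` is in a class of `u` containing no element of `I` or `K`. -/
def Lonely (u : Setoid (I ⊕ J ⊕ K)) (j : J) : Prop :=
  (∀ i : I, ¬ u (Sum.inl i) (Sum.inr (Sum.inl j))) ∧
  (∀ k : K, ¬ u (Sum.inr (Sum.inl j)) (Sum.inr (Sum.inr k)))

section
variable (u : Setoid (I ⊕ J ⊕ K)) (g : Fin d → Option I × Option K)

/-- the subtype of valid interpolations -/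
abbrev Sub : Type _ := {h : Fin d → Option J //
    Adapted (pi12 u) (fun a => ((g a).1, h a)) ∧
    Adapted (pi23 u) (fun a => (h a, (g a).2))}

abbrev Lon : Type _ := {j : J // Lonely u j}

abbrev Pos : Type _ := {a : Fin d // g a = (none, none)}

open Classical in
/-- the `j` in the class of `i`, if any -/
noncomputable def jval (i : I) : Option J :=
  if hi : ∃ j : J, u (Sum.inl i) (Sum.inr (Sum.inl j)) then some hi.choose else none

open Classical in
/-- the `j` in the class of `k`, if any -/
noncomputable def jvalK (k : K) : Option J :=
  if hk : ∃ j : J, u (Sum.inr (Sum.inl j)) (Sum.inr (Sum.inr k)) then some hk.choose else none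

end

variable {u : Setoid (I ⊕ J ⊕ K)} {g : Fin d → Option I × Option K}

theorem jval_some_iff (hu : IsRecollement3 u) {i : I} {j : J} :
    jval u i = some j ↔ u (Sum.inl i) (Sum.inr (Sum.inl j)) := by
  classical
  unfold jval
  split
  · rename_i hi
    constructor
    · rintro h
      have := hi.choose_spec
      rwa [Option.some_inj.1 h] at this
    · intro h
      have := hi.choose_spec
      exact congrArg some (hu.2.1 _ _ (u.trans (u.symm this) h))
  · rename_i hi
    simp only [reduceCtorEq, false_iff]
    exact fun h => hi ⟨j, h⟩

theorem jval_none_iff (hu : IsRecollement3 u) {i : I} :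
    jval u i = none ↔ ∀ j : J, ¬ u (Sum.inl i) (Sum.inr (Sum.inl j)) := by
  classical
  unfold jval
  split
  · rename_i hi
    simp only [reduceCtorEq, false_iff, not_forall, not_not]
    exact ⟨_, hi.choose_spec⟩
  · rename_i hi
    simpa using fun j h => hi ⟨j, h⟩

theorem jvalK_some_iff (hu : IsRecollement3 u) {k : K} {j : J} :
    jvalK u k = some j ↔ u (Sum.inr (Sum.inl j)) (Sum.inr (Sum.inr k)) := by
  classical
  unfold jvalK
  split
  · rename_i hk
    constructor
    · rintro h
      have := hk.choose_spec
      rwa [Option.some_inj.1 h] at this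
    · intro h
      have := hk.choose_spec
      exact congrArg some (hu.2.1 _ _ (u.trans this (u.symm h)))
  · rename_i hk
    simp only [reduceCtorEq, false_iff]
    exact fun h => hk ⟨j, h⟩

theorem jvalK_none_iff (hu : IsRecollement3 u) {k : K} :
    jvalK u k = none ↔ ∀ j : J, ¬ u (Sum.inr (Sum.inl j)) (Sum.inr (Sum.inr k)) := by
  classical
  unfold jvalK
  split
  · rename_i hk
    simp only [reduceCtorEq, false_iff, not_forall, not_not]
    exact ⟨_, hk.choose_spec⟩
  · rename_i hk
    simpa using fun j h => hk ⟨j, h⟩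

/-- the unique position of a lonely `j` in a valid interpolation has `g = (none, none)` -/
theorem posLonely (h : Sub u g) {j : J} (hj : Lonely u j) {a : Fin d}
    (ha : h.1 a = some j) : g a = (none, none) := by
  obtain ⟨h, hA, hB⟩ := h
  match hg1 : (g a).1, hg2 : (g a).2 with
  | some i, _ =>
    exact absurd (hA.2.2.1 a i j (Prod.ext hg1 ha)) (hj.1 i)
  | none, some k =>
    exact absurd (hB.2.2.1 a j k (Prod.ext ha hg2)) (hj.2 k)
  | none, none => exact Prod.ext hg1 hg2

/-- in a valid interpolation, the value at a position whose `g`-first-entry is `some i`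
is forced -/
theorem forcedI (hu : IsRecollement3 u) (h : Sub u g) {a : Fin d} {i : I}
    (ha : (g a).1 = some i) : h.1 a = jval u i := by
  match hv : h.1 a with
  | some j =>
    exact ((jval_some_iff hu).2 (h.2.1.2.2.1 a i j (Prod.ext ha hv))).symm
  | none =>
    exact ((jval_none_iff hu).2 (h.2.1.2.2.2.1 a i (Prod.ext ha hv))).symm

/-- similarly for `some k` in the second entry (and `none` in the first) -/
theorem forcedK (hu : IsRecollement3 u) (h : Sub u g) {a : Fin d} {k : K}
    (ha1 : (g a).1 = none) (ha2 : (g a).2 = some k) : h.1 a = jvalK u k := by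
  match hv : h.1 a with
  | some j =>
    exact ((jvalK_some_iff hu).2 (h.2.2.2.2.1 a j k (Prod.ext hv ha2))).symm
  | none =>
    exact ((jvalK_none_iff hu).2 (h.2.2.2.2.2.2 a k (Prod.ext hv ha2))).symm

/-- at a `(none,none)` position, any value of a valid interpolation is lonely -/
theorem lonelyOfNone (h : Sub u g) {a : Fin d} {j : J}
    (ha : g a = (none, none)) (hv : h.1 a = some j) : Lonely u j := by
  obtain ⟨h, hA, hB⟩ := h
  have h1 : (g a).1 = none := by rw [ha]
  have h2 : (g a).2 = none := by rw [ha]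
  exact ⟨fun i => hA.2.2.2.2 a j (Prod.ext h1 hv) i,
    fun k => hB.2.2.2.1 a j (Prod.ext hv h2) k⟩

end CAE

namespace CAE

variable {I J K : Type*} {d : ℕ} {u : Setoid (I ⊕ J ⊕ K)} {g : Fin d → Option I × Option K}

/-- the map sending a valid interpolation to the embedding recording the
positions of the lonely elements of `J` -/
noncomputable def F (h : Sub u g) : Lon u ↪ Pos g where
  toFun l := ⟨(h.2.1.2.1 l.1).choose, posLonely h l.2 (h.2.1.2.1 l.1).choose_spec.1⟩
  inj' l l' heq := by
    have h1 : h.1 (h.2.1.2.1 l.1).choose = some l.1 := (h.2.1.2.1 l.1).choose_spec.1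
    have h2 : h.1 (h.2.1.2.1 l'.1).choose = some l'.1 := (h.2.1.2.1 l'.1).choose_spec.1
    rw [Subtype.mk.injEq] at heq
    rw [heq, h2] at h1
    exact Subtype.ext (Option.some_inj.1 h1).symm

theorem F_spec (h : Sub u g) (l : Lon u) {a : Fin d} (ha : h.1 a = some l.1) :
    ((F h l : Pos g) : Fin d) = a :=
  ((h.2.1.2.1 l.1).choose_spec.2 a ha).symm

theorem F_eq_apply {h h' : Sub u g} (heq : F h = F h') {a : Fin d}
    (ha : g a = (none, none)) {j : J} (hv : h.1 a = some j) : h'.1 a = some j := by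
  have hj : Lonely u j := lonelyOfNone h ha hv
  have e1 : ((F h ⟨j, hj⟩ : Pos g) : Fin d) = a := F_spec h ⟨j, hj⟩ hv
  rw [heq] at e1
  have := (h'.2.1.2.1 j).choose_spec.1
  rw [show (h'.2.1.2.1 j).choose = a from e1] at this
  exact this

theorem F_inj (hu : IsRecollement3 u) : Function.Injective (F (u := u) (g := g)) := by
  intro h h' heq
  apply Subtype.ext
  funext a
  match h1 : (g a).1, h2 : (g a).2 with
  | some i, _ => rw [forcedI hu h h1, forcedI hu h' h1]
  | none, some k => rw [forcedK hu h h1 h2, forcedK hu h' h1 h2]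
  | none, none =>
    have ha : g a = (none, none) := Prod.ext h1 h2
    match hv : h.1 a, hv' : h'.1 a with
    | some j, _ => rw [← hv', F_eq_apply heq ha hv]
    | none, some j =>
      have := F_eq_apply heq.symm ha hv'
      rw [hv] at this
      exact this
    | none, none => rfl

section
variable (u g) in
open Classical in
/-- the canonical interpolation attached to an embedding of the lonely elements -/
noncomputable def interp (e : Lon u ↪ Pos g) : Fin d → Option J := fun a =>
  if h1 : ∃ i, (g a).1 = some i then jval u h1.choose
  else if h2 : ∃ k, (g a).2 = some k then jvalK u h2.choose
  else if h3 : ∃ l : Lon u, ((e l : Pos g) : Fin d) = a then some h3.choose.1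
  else none

variable {e : Lon u ↪ Pos g} {a : Fin d}

theorem interp_eqI {i : I} (ha : (g a).1 = some i) : interp u g e a = jval u i := by
  have hex : ∃ i', (g a).1 = some i' := ⟨i, ha⟩
  have hch : hex.choose = i :=
    Option.some_inj.1 (hex.choose_spec.symm.trans ha)
  rw [interp, dif_pos hex, hch]

theorem interp_eqK {k : K} (ha1 : (g a).1 = none) (ha2 : (g a).2 = some k) :
    interp u g e a = jvalK u k := by
  have hni : ¬ ∃ i, (g a).1 = some i := by
    rintro ⟨i, hi⟩; rw [ha1] at hi; exact absurd hi (by simp)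
  have hex : ∃ k', (g a).2 = some k' := ⟨k, ha2⟩
  have hch : hex.choose = k :=
    Option.some_inj.1 (hex.choose_spec.symm.trans ha2)
  rw [interp, dif_neg hni, dif_pos hex, hch]

theorem g_fst_none (ha : g a = (none, none)) : ¬ ∃ i, (g a).1 = some i := by
  rintro ⟨i, hi⟩; rw [ha] at hi; exact absurd hi (by simp)

theorem g_snd_none (ha : g a = (none, none)) : ¬ ∃ k, (g a).2 = some k := by
  rintro ⟨k, hk⟩; rw [ha] at hk; exact absurd hk (by simp)

theorem interp_pos (ha : g a = (none, none)) {l : Lon u}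
    (hl : ((e l : Pos g) : Fin d) = a) : interp u g e a = some l.1 := by
  have hex : ∃ l' : Lon u, ((e l' : Pos g) : Fin d) = a := ⟨l, hl⟩
  have hch : hex.choose = l := by
    apply e.injective
    apply Subtype.ext
    rw [hex.choose_spec, hl]
  rw [interp, dif_neg (g_fst_none ha), dif_neg (g_snd_none ha), dif_pos hex, hch]

theorem interp_nopos (ha : g a = (none, none))
    (hl : ¬ ∃ l : Lon u, ((e l : Pos g) : Fin d) = a) : interp u g e a = none := by
  rw [interp, dif_neg (g_fst_none ha), dif_neg (g_snd_none ha), dif_neg hl]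

end

end CAE

namespace CAE

variable {I J K : Type*} {d : ℕ} {u : Setoid (I ⊕ J ⊕ K)} {g : Fin d → Option I × Option K}
  {e : Lon u ↪ Pos g}

theorem interp_EU (hu : IsRecollement3 u) (hg : Adapted (pi13 u) g) (j : J) :
    ∃! a : Fin d, interp u g e a = some j := by
  by_cases hj : Lonely u j
  · refine ⟨(e ⟨j, hj⟩ : Pos g), interp_pos (e ⟨j, hj⟩).2 rfl, ?_⟩
    intro b hb
    match h1 : (g b).1, h2 : (g b).2 with
    | some i, _ =>
      rw [interp_eqI h1] at hb
      exact absurd ((jval_some_iff hu).1 hb) (hj.1 i)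
    | none, some k =>
      rw [interp_eqK h1 h2] at hb
      exact absurd ((jvalK_some_iff hu).1 hb) (hj.2 k)
    | none, none =>
      have ha : g b = (none, none) := Prod.ext h1 h2
      by_cases h3 : ∃ l : Lon u, ((e l : Pos g) : Fin d) = b
      · obtain ⟨l, hl⟩ := h3
        rw [interp_pos ha hl] at hb
        have hlj : l = ⟨j, hj⟩ := Subtype.ext (Option.some_inj.1 hb)
        rw [← hl, hlj]
      · rw [interp_nopos ha h3] at hb
        exact absurd hb (by simp)
  · by_cases hi : ∃ i, u (Sum.inl i) (Sum.inr (Sum.inl j))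
    · obtain ⟨i₀, hi₀⟩ := hi
      refine ⟨(hg.1 i₀).choose, ?_, ?_⟩
      · show interp u g e _ = some j
        rw [interp_eqI (hg.1 i₀).choose_spec.1]
        exact (jval_some_iff hu).2 hi₀
      · intro b hb
        match h1 : (g b).1, h2 : (g b).2 with
        | some i', _ =>
          rw [interp_eqI h1] at hb
          have hji' : u (Sum.inl i') (Sum.inr (Sum.inl j)) := (jval_some_iff hu).1 hb
          have hii : i' = i₀ := hu.1 _ _ (u.trans hji' (u.symm hi₀))
          exact (hg.1 i₀).choose_spec.2 b (hii ▸ h1)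
        | none, some k' =>
          rw [interp_eqK h1 h2] at hb
          have hjk : u (Sum.inr (Sum.inl j)) (Sum.inr (Sum.inr k')) := (jvalK_some_iff hu).1 hb
          exact absurd (u.trans hi₀ hjk) (hg.2.2.2.2 b k' (Prod.ext h1 h2) i₀)
        | none, none =>
          have ha : g b = (none, none) := Prod.ext h1 h2
          by_cases h3 : ∃ l : Lon u, ((e l : Pos g) : Fin d) = b
          · obtain ⟨l, hl⟩ := h3
            rw [interp_pos ha hl] at hb
            exact absurd (((Option.some_inj.1 hb) ▸ l.2 : Lonely u j).1 i₀ hi₀) not_false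
          · rw [interp_nopos ha h3] at hb
            exact absurd hb (by simp)
    · have hk : ∃ k, u (Sum.inr (Sum.inl j)) (Sum.inr (Sum.inr k)) := by
        by_contra hk
        exact hj ⟨fun i h => hi ⟨i, h⟩, fun k h => hk ⟨k, h⟩⟩
      obtain ⟨k₀, hk₀⟩ := hk
      have spec2 : (g (hg.2.1 k₀).choose).2 = some k₀ := (hg.2.1 k₀).choose_spec.1
      have ha₀1 : (g (hg.2.1 k₀).choose).1 = none := by
        match hgg : (g (hg.2.1 k₀).choose).1 with
        | none => rfl
        | some i =>
          have hik := hg.2.2.1 _ i k₀ (Prod.ext hgg spec2)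
          exact absurd (u.trans hik (u.symm hk₀)) (fun H => hi ⟨i, H⟩)
      refine ⟨(hg.2.1 k₀).choose, ?_, ?_⟩
      · show interp u g e _ = some j
        rw [interp_eqK ha₀1 spec2]
        exact (jvalK_some_iff hu).2 hk₀
      · intro b hb
        match h1 : (g b).1, h2 : (g b).2 with
        | some i', _ =>
          rw [interp_eqI h1] at hb
          exact absurd ((jval_some_iff hu).1 hb) (fun H => hi ⟨i', H⟩)
        | none, some k' =>
          rw [interp_eqK h1 h2] at hb
          have hjk' : u (Sum.inr (Sum.inl j)) (Sum.inr (Sum.inr k')) := (jvalK_some_iff hu).1 hb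
          have hkk : k' = k₀ := hu.2.2 _ _ (u.trans (u.symm hjk') hk₀)
          exact (hg.2.1 k₀).choose_spec.2 b (hkk ▸ h2)
        | none, none =>
          have ha : g b = (none, none) := Prod.ext h1 h2
          by_cases h3 : ∃ l : Lon u, ((e l : Pos g) : Fin d) = b
          · obtain ⟨l, hl⟩ := h3
            rw [interp_pos ha hl] at hb
            exact absurd (((Option.some_inj.1 hb) ▸ l.2 : Lonely u j).2 k₀ hk₀) not_false
          · rw [interp_nopos ha h3] at hb
            exact absurd hb (by simp)

theorem interp_good (hu : IsRecollement3 u) (hg : Adapted (pi13 u) g) :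
    Adapted (pi12 u) (fun a => ((g a).1, interp u g e a)) ∧
    Adapted (pi23 u) (fun a => (interp u g e a, (g a).2)) := by
  constructor
  · refine ⟨hg.1, fun j => interp_EU hu hg j, ?_, ?_, ?_⟩
    · intro a i j hyp
      rw [Prod.mk.injEq] at hyp
      obtain ⟨h1, h2⟩ := hyp
      rw [interp_eqI h1] at h2
      exact (jval_some_iff hu).1 h2
    · intro a i hyp j
      rw [Prod.mk.injEq] at hyp
      obtain ⟨h1, h2⟩ := hyp
      rw [interp_eqI h1] at h2
      exact (jval_none_iff hu).1 h2 j
    · intro a j hyp i hij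
      rw [Prod.mk.injEq] at hyp
      obtain ⟨h1, h2⟩ := hyp
      match hg2 : (g a).2 with
      | some k =>
        rw [interp_eqK h1 hg2] at h2
        have hjk := (jvalK_some_iff hu).1 h2
        exact hg.2.2.2.2 a k (Prod.ext h1 hg2) i (u.trans hij hjk)
      | none =>
        have ha : g a = (none, none) := Prod.ext h1 hg2
        by_cases h3 : ∃ l : Lon u, ((e l : Pos g) : Fin d) = a
        · obtain ⟨l, hl⟩ := h3
          rw [interp_pos ha hl] at h2
          exact (((Option.some_inj.1 h2) ▸ l.2 : Lonely u j)).1 i hij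
        · rw [interp_nopos ha h3] at h2
          exact absurd h2 (by simp)
  · refine ⟨fun j => interp_EU hu hg j, hg.2.1, ?_, ?_, ?_⟩
    · intro a j k hyp
      rw [Prod.mk.injEq] at hyp
      obtain ⟨h1, h2⟩ := hyp
      match hg1 : (g a).1 with
      | some i =>
        rw [interp_eqI hg1] at h1
        have hij := (jval_some_iff hu).1 h1
        have hik := hg.2.2.1 a i k (Prod.ext hg1 h2)
        exact u.trans (u.symm hij) hik
      | none =>
        rw [interp_eqK hg1 h2] at h1
        exact (jvalK_some_iff hu).1 h1
    · intro a j hyp k hjk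
      rw [Prod.mk.injEq] at hyp
      obtain ⟨h1, h2⟩ := hyp
      match hg1 : (g a).1 with
      | some i =>
        rw [interp_eqI hg1] at h1
        have hij := (jval_some_iff hu).1 h1
        exact hg.2.2.2.1 a i (Prod.ext hg1 h2) k (u.trans hij hjk)
      | none =>
        have ha : g a = (none, none) := Prod.ext hg1 h2
        by_cases h3 : ∃ l : Lon u, ((e l : Pos g) : Fin d) = a
        · obtain ⟨l, hl⟩ := h3
          rw [interp_pos ha hl] at h1
          exact (((Option.some_inj.1 h1) ▸ l.2 : Lonely u j)).2 k hjk
        · rw [interp_nopos ha h3] at h1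
          exact absurd h1 (by simp)
    · intro a k hyp j hjk
      rw [Prod.mk.injEq] at hyp
      obtain ⟨h1, h2⟩ := hyp
      match hg1 : (g a).1 with
      | some i =>
        rw [interp_eqI hg1] at h1
        have hik := hg.2.2.1 a i k (Prod.ext hg1 h2)
        exact (jval_none_iff hu).1 h1 j (u.trans hik (u.symm hjk))
      | none =>
        rw [interp_eqK hg1 h2] at h1
        exact (jvalK_none_iff hu).1 h1 j hjk

theorem F_surj (hu : IsRecollement3 u) (hg : Adapted (pi13 u) g) :
    Function.Surjective (F (u := u) (g := g)) := by
  intro e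
  refine ⟨⟨interp u g e, interp_good hu hg⟩, ?_⟩
  apply DFunLike.ext
  intro l
  apply Subtype.ext
  exact F_spec _ l (interp_pos (e l).2 rfl)

theorem card_eq (hu : IsRecollement3 u) (hg : Adapted (pi13 u) g) :
    Nat.card (Sub u g) = Nat.card (Lon u ↪ Pos g) :=
  Nat.card_eq_of_bijective F ⟨F_inj hu, F_surj hu hg⟩

end CAE

namespace CAE

variable {I J K : Type*} {d : ℕ} {u : Setoid (I ⊕ J ⊕ K)} {g : Fin d → Option I × Option K}

/-- position map of classes of `pi13 u` -/
noncomputable def pos (hg : Adapted (pi13 u) g) : I ⊕ K → Fin d := fun x =>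
  match x with
  | Sum.inl i => (hg.1 i).choose
  | Sum.inr k => (hg.2.1 k).choose

theorem pos_inl (hg : Adapted (pi13 u) g) (i : I) : (g (pos hg (Sum.inl i))).1 = some i :=
  (hg.1 i).choose_spec.1

theorem pos_inr (hg : Adapted (pi13 u) g) (k : K) : (g (pos hg (Sum.inr k))).2 = some k :=
  (hg.2.1 k).choose_spec.1

theorem mixed (hu : IsRecollement3 u) (hg : Adapted (pi13 u) g) {i : I} {k : K}
    (hik : u (Sum.inl i) (Sum.inr (Sum.inr k))) : (g (pos hg (Sum.inl i))).2 = some k := by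
  match h2 : (g (pos hg (Sum.inl i))).2 with
  | none =>
    exact absurd hik (hg.2.2.2.1 _ i (Prod.ext (pos_inl hg i) h2) k)
  | some k' =>
    have hik' := hg.2.2.1 _ i k' (Prod.ext (pos_inl hg i) h2)
    rw [hu.2.2 _ _ (u.trans (u.symm hik') hik)]

theorem pos_rel (hu : IsRecollement3 u) (hg : Adapted (pi13 u) g) :
    ∀ x y : I ⊕ K, pi13 u x y → pos hg x = pos hg y := by
  rintro (i | k) (i' | k') hxy
  · have : i = i' := hu.1 _ _ hxy
    rw [this]
  · exact (hg.2.1 k').choose_spec.2 _ (mixed hu hg hxy)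
  · exact ((hg.2.1 k).choose_spec.2 _ (mixed hu hg (u.symm hxy))).symm
  · have : k = k' := hu.2.2 _ _ hxy
    rw [this]

theorem pos_ne (hg : Adapted (pi13 u) g) (x : I ⊕ K) : ¬ g (pos hg x) = (none, none) := by
  intro h
  match x with
  | Sum.inl i =>
    have := pos_inl hg i
    rw [h] at this
    exact absurd this (by simp)
  | Sum.inr k =>
    have := pos_inr hg k
    rw [h] at this
    exact absurd this (by simp)

/-- the classes of `pi13 u` biject with the positions where `g` is not `(none, none)` -/
theorem quot13_equiv_npos (hu : IsRecollement3 u) (hg : Adapted (pi13 u) g) :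
    Nat.card (Quotient (pi13 u)) = Nat.card {a : Fin d // ¬ g a = (none, none)} := by
  apply Nat.card_eq_of_bijective
    (Quotient.lift (fun x => (⟨pos hg x, pos_ne hg x⟩ : {a : Fin d // ¬ g a = (none, none)}))
      (fun x y hxy => Subtype.ext (pos_rel hu hg x y hxy)))
  constructor
  · intro p q
    induction p using Quotient.inductionOn with | h x =>
    induction q using Quotient.inductionOn with | h y =>
    intro hpq
    have hxy : pos hg x = pos hg y := congrArg Subtype.val hpq
    apply Quotient.sound
    match x, y with
    | Sum.inl i, Sum.inl i' =>
      have h1 := pos_inl hg i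
      rw [hxy, pos_inl hg i'] at h1
      exact Option.some_inj.1 h1.symm ▸ (pi13 u).refl _
    | Sum.inl i, Sum.inr k =>
      have h2 := pos_inr hg k
      rw [← hxy] at h2
      exact hg.2.2.1 _ i k (Prod.ext (pos_inl hg i) h2)
    | Sum.inr k, Sum.inl i =>
      have h2 := pos_inr hg k
      rw [hxy] at h2
      exact (pi13 u).symm (hg.2.2.1 _ i k (Prod.ext (pos_inl hg i) h2))
    | Sum.inr k, Sum.inr k' =>
      have h1 := pos_inr hg k
      rw [hxy, pos_inr hg k'] at h1
      exact Option.some_inj.1 h1.symm ▸ (pi13 u).refl _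
  · rintro ⟨a, ha⟩
    match h1 : (g a).1 with
    | some i =>
      exact ⟨Quotient.mk _ (Sum.inl i), Subtype.ext ((hg.1 i).choose_spec.2 a h1).symm⟩
    | none =>
      match h2 : (g a).2 with
      | some k =>
        exact ⟨Quotient.mk _ (Sum.inr k), Subtype.ext ((hg.2.1 k).choose_spec.2 a h2).symm⟩
      | none => exact absurd (Prod.ext h1 h2) ha

theorem card_pos [Finite I] [Finite K] (hu : IsRecollement3 u) (hg : Adapted (pi13 u) g)
    (hd : Nat.card (Quotient (pi13 u)) ≤ d) :
    Nat.card (Pos g) = d - Nat.card (Quotient (pi13 u)) := by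
  classical
  have hsum : Nat.card (Pos g) + Nat.card {a : Fin d // ¬ g a = (none, none)} = d := by
    have := Nat.card_congr (Equiv.sumCompl (fun a : Fin d => g a = (none, none)))
    rw [Nat.card_sum] at this
    simpa [Nat.card_eq_fintype_card] using this
  rw [← quot13_equiv_npos hu hg] at hsum
  omega

/-- the classes of `u` are the classes of `pi13 u` together with the lonely elements -/
theorem card_quot [Finite I] [Finite J] [Finite K] (hu : IsRecollement3 u) :
    Nat.card (Quotient u) = Nat.card (Quotient (pi13 u)) + Nat.card (Lon u) := by
  classical
  rw [← Nat.card_sum]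
  symm
  apply Nat.card_eq_of_bijective
    (Sum.elim
      (Quotient.lift (fun x => (Quotient.mk u (Sum.map id Sum.inr x)))
        (fun x y hxy => Quotient.sound hxy))
      (fun l => Quotient.mk u (Sum.inr (Sum.inl l.1))))
  constructor
  · rintro (p | l) (q | l') hpq
    · induction p using Quotient.inductionOn with | h x =>
      induction q using Quotient.inductionOn with | h y =>
      have hxy : u (Sum.map id Sum.inr x) (Sum.map id Sum.inr y) := Quotient.exact hpq
      exact congrArg _ (Quotient.sound (a := x) (b := y) hxy)
    · induction p using Quotient.inductionOn with | h x =>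
      have hrel : u (Sum.map id Sum.inr x) (Sum.inr (Sum.inl l'.1)) := Quotient.exact hpq
      match x with
      | Sum.inl i => exact (l'.2.1 i hrel).elim
      | Sum.inr k => exact (l'.2.2 k (u.symm hrel)).elim
    · induction q using Quotient.inductionOn with | h y =>
      have hrel : u (Sum.inr (Sum.inl l.1)) (Sum.map id Sum.inr y) := Quotient.exact hpq
      match y with
      | Sum.inl i => exact (l.2.1 i (u.symm hrel)).elim
      | Sum.inr k => exact (l.2.2 k hrel).elim
    · have hrel : u (Sum.inr (Sum.inl l.1)) (Sum.inr (Sum.inl l'.1)) := Quotient.exact hpq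
      exact congrArg _ (Subtype.ext (hu.2.1 _ _ hrel))
  · intro q
    induction q using Quotient.inductionOn with | h x =>
    match x with
    | Sum.inl i => exact ⟨Sum.inl (Quotient.mk _ (Sum.inl i)), rfl⟩
    | Sum.inr (Sum.inr k) => exact ⟨Sum.inl (Quotient.mk _ (Sum.inr k)), rfl⟩
    | Sum.inr (Sum.inl j) =>
      by_cases hj : Lonely u j
      · exact ⟨Sum.inr ⟨j, hj⟩, rfl⟩
      · by_cases hi : ∃ i, u (Sum.inl i) (Sum.inr (Sum.inl j))
        · obtain ⟨i₀, hi₀⟩ := hi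
          exact ⟨Sum.inl (Quotient.mk _ (Sum.inl i₀)), Quotient.sound hi₀⟩
        · have hk : ∃ k, u (Sum.inr (Sum.inl j)) (Sum.inr (Sum.inr k)) := by
            by_contra hk
            exact hj ⟨fun i h => hi ⟨i, h⟩, fun k h => hk ⟨k, h⟩⟩
          obtain ⟨k₀, hk₀⟩ := hk
          exact ⟨Sum.inl (Quotient.mk _ (Sum.inr k₀)), Quotient.sound (u.symm hk₀)⟩

end CAE

/-- Given a recollement `u` of `I, J, K` and `d ≥ #π₁,₃(u)`, and a fixed
sequence `g` adapted to `π₁,₃(u)`, the number of ways to interpolate entries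
`j₁,…,j_d ∈ J ⊔ {∅}` making the two resulting sequences adapted to
`r = π₁,₂(u)` and `s = π₂,₃(u)` respectively is the falling factorial
`(d − #π₁,₃(u))(d − #π₁,₃(u) − 1) ⋯ (d − #u + 1)`. -/
theorem count_adapted_extensions {I J K : Type*} [Finite I] [Finite J] [Finite K]
    (u : Setoid (I ⊕ J ⊕ K)) (hu : IsRecollement3 u) (d : ℕ)
    (hd : Nat.card (Quotient (pi13 u)) ≤ d)
    (g : Fin d → Option I × Option K) (hg : Adapted (pi13 u) g) :
    Nat.card {h : Fin d → Option J //
        Adapted (pi12 u) (fun a => ((g a).1, h a)) ∧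
        Adapted (pi23 u) (fun a => (h a, (g a).2))} =
      (d - Nat.card (Quotient (pi13 u))).descFactorial
        (Nat.card (Quotient u) - Nat.card (Quotient (pi13 u))) := by
  classical
  have h1 : Nat.card {h : Fin d → Option J //
        Adapted (pi12 u) (fun a => ((g a).1, h a)) ∧
        Adapted (pi23 u) (fun a => (h a, (g a).2))} =
      Nat.card (CAE.Lon u ↪ CAE.Pos g) := CAE.card_eq hu hg
  have h2 : Nat.card (CAE.Lon u ↪ CAE.Pos g) =
      (Nat.card (CAE.Pos g)).descFactorial (Nat.card (CAE.Lon u)) := by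
    have := Fintype.ofFinite (CAE.Lon u)
    have := Fintype.ofFinite (CAE.Pos g)
    simp [Nat.card_eq_fintype_card, Fintype.card_embedding_eq]
  rw [h1, h2, CAE.card_pos hu hg hd]
  rw [CAE.card_quot (u := u) hu, Nat.add_sub_cancel_left]
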